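/- If n, A, B, C are integers with nA² + BC = -1, then the polynomial nC·X² - 2nA·X - B is irreducible (equivalently, primitive as a quadratic polynomial with negative discriminant) unless B and C are both even; in that case (nC/2)·X² - nA·X - B/2 has integer coefficients, content 1, and discriminant -n. -/

import Mathlib

theorem primitivity_cases (n A B C : ℤ) (hn : 1 < n)
    (h : n * A ^ 2 + B * C = -1) (hB : B < 0) (hC : 0 < C) :
    (¬ (Even B ∧ Even C) → Int.gcd (n * C) (Int.gcd (2 * n * A) B) = 1) ∧
    (Even B ∧ Even C →
      2 ∣ n * C ∧ 2 ∣ B ∧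
      Int.gcd (n * C / 2) (Int.gcd (n * A) (B / 2)) = 1 ∧
      (-(n * A)) ^ 2 - 4 * (n * C / 2) * (-(B / 2)) = -n) := by
  constructor
  · intro hne
    set d := Int.gcd (n * C) (Int.gcd (2 * n * A) B) with hd
    have h1 : (d:ℤ) ∣ n * C := Int.gcd_dvd_left _ _
    have hin : (d:ℤ) ∣ (Int.gcd (2 * n * A) B : ℤ) := Int.gcd_dvd_right _ _
    have h2 : (d:ℤ) ∣ 2 * n * A := hin.trans (Int.gcd_dvd_left _ _)
    have h3 : (d:ℤ) ∣ B := hin.trans (Int.gcd_dvd_right _ _)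
    have hcomb : (d:ℤ) ∣ (2 * n * A) * A + B * (2 * C) :=
      dvd_add (h2.mul_right A) (h3.mul_right (2 * C))
    have heq : (2 * n * A) * A + B * (2 * C) = -2 := by nlinarith [sq_nonneg A]
    rw [heq] at hcomb
    have hdvd2 : d ∣ 2 := by
      have := Int.natCast_dvd_natCast.mp (show ((d:ℕ):ℤ) ∣ ((2:ℕ):ℤ) by have h' := hcomb.neg_right; rw [neg_neg] at h'; exact_mod_cast h')
      simpa using this
    rcases (Nat.dvd_prime Nat.prime_two).mp hdvd2 with h1' | h2'
    · exact h1'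
    · -- d = 2: B and C both even, contradiction
      exfalso
      rw [h2'] at h1 h3
      have hBe : (2:ℤ) ∣ B := by exact_mod_cast h3
      have hnCe : (2:ℤ) ∣ n * C := by exact_mod_cast h1
      have hBCe : Even (B * C) := (Int.even_mul).2 (Or.inl ⟨B/2, by omega⟩)
      have hnA2 : ¬ Even (n * A ^ 2) := by
        intro he
        obtain ⟨k, hk⟩ := he
        obtain ⟨m, hm⟩ := hBCe
        omega
      have hno : ¬ Even n := fun he => hnA2 (he.mul_right _)
      have hCe : Even C := by
        rcases (Int.even_mul).1 ((even_iff_two_dvd.mpr hnCe)) with h'|h'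
        · exact absurd h' hno
        · exact h'
      exact hne ⟨⟨B/2, by omega⟩, hCe⟩
  · rintro ⟨⟨b, hb⟩, ⟨c, hc⟩⟩
    have hb' : B = 2 * b := by omega
    have hc' : C = 2 * c := by omega
    subst hb' hc'
    have hnC2 : n * (2 * c) / 2 = n * c := by
      rw [show n * (2 * c) = 2 * (n * c) by ring]
      exact Int.mul_ediv_cancel_left _ two_ne_zero
    have hB2 : 2 * b / 2 = b := Int.mul_ediv_cancel_left _ two_ne_zero
    refine ⟨⟨n * c, by ring⟩, ⟨b, by ring⟩, ?_, ?_⟩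
    · rw [hnC2, hB2]
      set d := Int.gcd (n * c) (Int.gcd (n * A) b) with hd
      have h1 : (d:ℤ) ∣ n * c := Int.gcd_dvd_left _ _
      have hin : (d:ℤ) ∣ (Int.gcd (n * A) b : ℤ) := Int.gcd_dvd_right _ _
      have h2 : (d:ℤ) ∣ n * A := hin.trans (Int.gcd_dvd_left _ _)
      have h3 : (d:ℤ) ∣ b := hin.trans (Int.gcd_dvd_right _ _)
      have hcomb : (d:ℤ) ∣ (n * A) * A + b * (4 * c) :=
        dvd_add (h2.mul_right A) (h3.mul_right (4 * c))
      have heq : (n * A) * A + b * (4 * c) = -1 := by nlinarith [sq_nonneg A]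
      rw [heq] at hcomb
      have : (d:ℤ) ∣ 1 := hcomb.neg_right
      have : d ∣ 1 := by exact_mod_cast this
      simpa using this
    · rw [hnC2, hB2]
      nlinarith [sq_nonneg A]
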